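/- For any potential V in the class 𝒞, any integer N ≥ 2 and any j ∈ {1,…,N−1}, the linear function f_N^{(j)}(x) = Σ_{k=1}^{N-1} sin(jπk/N)·x_k satisfies ℒ f_N^{(j)}(x) = −(1 − cos(jπ/N))·f_N^{(j)}(x) for every x ∈ Ω_N; in particular every linear function of the coordinates is mapped by ℒ to a linear function, and Q_k applied to the coordinate map g_k(x) = x_k gives Q_k g_k(x) = (x_{k-1}+x_{k+1})/2. -/

import Mathlib

open MeasureTheory Filter Real

noncomputable section

/-- The class 𝒞 of potentials: convex, at most polynomial growth, non-affine
(the asymptotic slopes at `+∞` and `-∞`, taken in the extended reals, differ). -/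
structure InClassC (V : ℝ → ℝ) : Prop where
  convex : ConvexOn ℝ Set.univ V
  growth : ∃ C > (0 : ℝ), ∃ K : ℝ, 1 ≤ K ∧ ∀ x : ℝ, |V x| ≤ C * (1 + |x|) ^ K
  slopes : ∃ vm vp : EReal,
    Tendsto (fun x : ℝ => ((V x / x : ℝ) : EReal)) atBot (nhds vm) ∧
    Tendsto (fun x : ℝ => ((V x / x : ℝ) : EReal)) atTop (nhds vp) ∧
    vm < vp

/-- Configuration in `Ω_N` built from the `N-1` inner coordinates: coordinates
`1,…,N-1` are free, all others (in particular `0` and `N`) vanish. -/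
def conf (N : ℕ) (y : Fin (N - 1) → ℝ) : ℕ → ℝ := fun k =>
  if h : 1 ≤ k ∧ k ≤ N - 1 then y ⟨k - 1, by omega⟩ else 0

/-- The Hamiltonian `H(x) = Σ_{k=1}^N V(x_k - x_{k-1})`. -/
def Ham (V : ℝ → ℝ) (N : ℕ) (x : ℕ → ℝ) : ℝ :=
  ∑ k ∈ Finset.range N, V (x (k + 1) - x k)

/-- Normalisation constant `Z_N`. -/
def Zpart (V : ℝ → ℝ) (N : ℕ) : ℝ :=
  ∫ y : Fin (N - 1) → ℝ, Real.exp (-(Ham V N (conf N y)))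

/-- The Gibbs measure `π_N` on `Ω_N`, viewed as a measure on configurations `ℕ → ℝ`:
the inner coordinates have density `e^{-H}/Z_N` w.r.t. Lebesgue measure. -/
def piN (V : ℝ → ℝ) (N : ℕ) : Measure (ℕ → ℝ) :=
  Measure.map (conf N)
    (volume.withDensity fun y : Fin (N - 1) → ℝ =>
      ENNReal.ofReal (Real.exp (-(Ham V N (conf N y))) / Zpart V N))

/-- The resampling density `ρ_{b,c}`. -/
def rho (V : ℝ → ℝ) (b c u : ℝ) : ℝ :=
  Real.exp (-(V (u - b) + V (c - u))) / ∫ s : ℝ, Real.exp (-(V (s - b) + V (c - s)))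

/-- The heat-bath update operator `Q_k` acting on functions. -/
def Qop (V : ℝ → ℝ) (k : ℕ) (f : (ℕ → ℝ) → ℝ) (x : ℕ → ℝ) : ℝ :=
  ∫ u : ℝ, f (Function.update x k u) * rho V (x (k - 1)) (x (k + 1)) u

/-- The heat-bath generator `ℒ f = Σ_{k=1}^{N-1} (Q_k f - f)`. -/
def gen (V : ℝ → ℝ) (N : ℕ) (f : (ℕ → ℝ) → ℝ) (x : ℕ → ℝ) : ℝ :=
  ∑ k ∈ Finset.Icc 1 (N - 1), (Qop V k f x - f x)

/-- The spectral gap of `ℒ` in `L²(π_N)`. -/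
def spectralGap (V : ℝ → ℝ) (N : ℕ) : ℝ :=
  sInf { r : ℝ | ∃ f : (ℕ → ℝ) → ℝ, MemLp f 2 (piN V N) ∧
    (∫ x, f x ∂piN V N) = 0 ∧ (∫ x, (f x) ^ 2 ∂piN V N) ≠ 0 ∧
    r = (∫ x, f x * (-(gen V N f x)) ∂piN V N) / ∫ x, (f x) ^ 2 ∂piN V N }

/-- The Markov kernel resampling coordinate `k`, as a measure-valued map. -/
def Qstep (V : ℝ → ℝ) (k : ℕ) (x : ℕ → ℝ) : Measure (ℕ → ℝ) :=
  Measure.map (fun u => Function.update x k u)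
    (volume.withDensity fun u : ℝ => ENNReal.ofReal (rho V (x (k - 1)) (x (k + 1)) u))

/-- The averaged kernel `Q̄ = (N-1)⁻¹ Σ_{k=1}^{N-1} Q_k`. -/
def QbarStep (V : ℝ → ℝ) (N : ℕ) (x : ℕ → ℝ) : Measure (ℕ → ℝ) :=
  ENNReal.ofReal ((N - 1 : ℝ)⁻¹) • ∑ k ∈ Finset.Icc 1 (N - 1), Qstep V k x

/-- Iterates `Q̄^n(x, ·)`. -/
def QbarIter (V : ℝ → ℝ) (N : ℕ) : ℕ → (ℕ → ℝ) → Measure (ℕ → ℝ)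
  | 0 => fun x => Measure.dirac x
  | n + 1 => fun x => (QbarStep V N x).bind (QbarIter V N n)

/-- The law `P_t^x` of the heat-bath process at time `t` started at `x`. -/
def Pt (V : ℝ → ℝ) (N : ℕ) (t : ℝ) (x : ℕ → ℝ) : Measure (ℕ → ℝ) :=
  Measure.sum fun n : ℕ =>
    ENNReal.ofReal (Real.exp (-((N : ℝ) - 1) * t) * (((N : ℝ) - 1) * t) ^ n / n.factorial) •
      QbarIter V N n x

/-- Total variation distance `sup_B (μ(B) - ν(B))`. -/
def tvDist {α : Type*} [MeasurableSpace α] (μ ν : Measure α) : ℝ :=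
  sSup { r : ℝ | ∃ B : Set α, MeasurableSet B ∧ r = (μ B).toReal - (ν B).toReal }

/-- Worst-case distance to equilibrium from initial conditions of height at most `N`. -/
def dN (V : ℝ → ℝ) (N : ℕ) (t : ℝ) : ℝ :=
  sSup { r : ℝ | ∃ x : ℕ → ℝ, x 0 = 0 ∧ x N = 0 ∧ (∀ k ≤ N, |x k| ≤ (N : ℝ)) ∧
    r = tvDist (Pt V N t x) (piN V N) }

/-- The `ε`-mixing time. -/
def TN (V : ℝ → ℝ) (N : ℕ) (ε : ℝ) : ℝ :=
  sInf { t : ℝ | 0 ≤ t ∧ dN V N t < ε }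



section AuxProofs

lemma InClassC.continuous {V : ℝ → ℝ} (hV : InClassC V) : Continuous V := by
  have := ConvexOn.continuousOn isOpen_univ hV.convex
  rwa [continuousOn_univ] at this

lemma InClassC.linear_lower {V : ℝ → ℝ} (hV : InClassC V) :
    ∃ q1 q2 : ℝ, q1 < q2 ∧ ∃ B : ℝ, ∀ x : ℝ,
      q1 * x - B ≤ V x ∧ q2 * x - B ≤ V x := by
  obtain ⟨vm, vp, hbot, htop, hlt⟩ := hV.slopes
  obtain ⟨q, hq1, hq2⟩ := EReal.exists_between_coe_real hlt
  obtain ⟨q1, hq1a, hq1b⟩ := EReal.exists_between_coe_real hq1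
  obtain ⟨q2, hq2a, hq2b⟩ := EReal.exists_between_coe_real hq2
  have hq12 : q1 < q2 := by exact_mod_cast hq1b.trans hq2a
  have h1 : ∀ᶠ x : ℝ in atBot, ((V x / x : ℝ) : EReal) < ((q1 : ℝ) : EReal) :=
    hbot.eventually_lt_const hq1a
  have h2 : ∀ᶠ x : ℝ in atTop, ((q2 : ℝ) : EReal) < ((V x / x : ℝ) : EReal) :=
    htop.eventually_const_lt hq2b
  rw [eventually_atBot] at h1
  rw [eventually_atTop] at h2
  obtain ⟨M1, hM1⟩ := h1
  obtain ⟨M2, hM2⟩ := h2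
  set m1 := min M1 (-1) with hm1
  set m2 := max M2 1 with hm2
  have hm1le : m1 ≤ -1 := min_le_right _ _
  have hm2ge : 1 ≤ m2 := le_max_right _ _
  have hcont : ContinuousOn (fun x => max (q1 * x) (q2 * x) - V x) (Set.Icc m1 m2) :=
    (((continuous_const.mul continuous_id).max (continuous_const.mul continuous_id)).sub
      hV.continuous).continuousOn
  obtain ⟨z, hz, hzmax⟩ := (isCompact_Icc (a := m1) (b := m2)).exists_isMaxOn
    ⟨m1, le_refl m1, by linarith⟩ hcont
  set B := max (max (q1 * z) (q2 * z) - V z) 0 with hB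
  have hB0 : 0 ≤ B := le_max_right _ _
  refine ⟨q1, q2, hq12, B, fun x => ?_⟩
  have key : max (q1 * x) (q2 * x) - B ≤ V x := by
    rcases le_or_gt x m1 with hx | hx
    · have hxneg : x < 0 := by linarith
      have h' : V x / x < q1 := by exact_mod_cast hM1 x (hx.trans (min_le_left _ _))
      have h'' : q1 * x < V x := by
        rw [div_lt_iff_of_neg hxneg] at h'
        linarith
      have : q2 * x ≤ q1 * x := mul_le_mul_of_nonpos_right hq12.le hxneg.le
      have : max (q1 * x) (q2 * x) = q1 * x := max_eq_left this
      linarith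
    rcases le_or_gt m2 x with hx2 | hx2
    · have hxpos : 0 < x := by linarith
      have h' : q2 < V x / x := by exact_mod_cast hM2 x ((le_max_left _ _).trans hx2)
      have h'' : q2 * x < V x := by
        rw [lt_div_iff₀ hxpos] at h'
        linarith
      have : q1 * x ≤ q2 * x := mul_le_mul_of_nonneg_right hq12.le hxpos.le
      have : max (q1 * x) (q2 * x) = q2 * x := max_eq_right this
      linarith
    · have hmem : x ∈ Set.Icc m1 m2 := ⟨hx.le, hx2.le⟩
      have := hzmax hmem
      simp only [Set.mem_setOf_eq] at this
      have hle : max (q1 * x) (q2 * x) - V x ≤ B := le_trans this (le_max_left _ _)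
      linarith
  exact ⟨by have := le_max_left (q1 * x) (q2 * x); linarith,
    by have := le_max_right (q1 * x) (q2 * x); linarith⟩

section
open Set in
lemma integrable_exp_neg_mul_abs' {a : ℝ} (ha : 0 < a) :
    Integrable (fun u : ℝ => Real.exp (-(a * |u|))) := by
  have h1 : IntegrableOn (fun u : ℝ => Real.exp (-(a * |u|))) (Ioi (0:ℝ)) := by
    apply (exp_neg_integrableOn_Ioi 0 ha).congr_fun _ measurableSet_Ioi
    intro x hx
    simp only
    rw [abs_of_pos hx, neg_mul]
  have h1' : IntegrableOn (fun u : ℝ => Real.exp (-(a * |u|))) (Ici (0:ℝ)) :=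
    Iff.mpr integrableOn_Ici_iff_integrableOn_Ioi h1
  have h2 : IntegrableOn (fun u : ℝ => Real.exp (-(a * |u|))) (Iic (0:ℝ)) := by
    rw [← Measure.map_neg_eq_self (volume : Measure ℝ)]
    have m : MeasurableEmbedding fun x : ℝ => -x :=
      (Homeomorph.neg ℝ).measurableEmbedding
    rw [m.integrableOn_map_iff]
    simp only [Function.comp_def, abs_neg, neg_preimage, neg_Iic, neg_zero]
    exact h1'
  have := h2.union h1
  rwa [Iic_union_Ioi, integrableOn_univ] at this
end

lemma InClassC.W_lower {V : ℝ → ℝ} (hV : InClassC V) (b c : ℝ) :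
    ∃ a : ℝ, 0 < a ∧ ∃ B' : ℝ, ∀ u : ℝ, a * |u| - B' ≤ V (u - b) + V (c - u) := by
  obtain ⟨q1, q2, h12, B, hB⟩ := hV.linear_lower
  refine ⟨q2 - q1, by linarith,
    2 * B + |q1| * (|b| + |c|) + |q2| * (|b| + |c|), fun u => ?_⟩
  have e1 : q1 * b ≤ |q1| * |b| := (le_abs_self _).trans (le_of_eq (abs_mul _ _))
  have e2 : -(q1 * b) ≤ |q1| * |b| := (neg_le_abs _).trans (le_of_eq (abs_mul _ _))
  have e3 : q1 * c ≤ |q1| * |c| := (le_abs_self _).trans (le_of_eq (abs_mul _ _))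
  have e4 : -(q1 * c) ≤ |q1| * |c| := (neg_le_abs _).trans (le_of_eq (abs_mul _ _))
  have e5 : q2 * b ≤ |q2| * |b| := (le_abs_self _).trans (le_of_eq (abs_mul _ _))
  have e6 : -(q2 * b) ≤ |q2| * |b| := (neg_le_abs _).trans (le_of_eq (abs_mul _ _))
  have e7 : q2 * c ≤ |q2| * |c| := (le_abs_self _).trans (le_of_eq (abs_mul _ _))
  have e8 : -(q2 * c) ≤ |q2| * |c| := (neg_le_abs _).trans (le_of_eq (abs_mul _ _))
  rcases abs_cases u with ⟨h, _⟩ | ⟨h, _⟩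
  · have h1 := (hB (u - b)).2
    have h2 := (hB (c - u)).1
    rw [h]; nlinarith [abs_nonneg q1, abs_nonneg q2, abs_nonneg b, abs_nonneg c]
  · have h1 := (hB (u - b)).1
    have h2 := (hB (c - u)).2
    rw [h]; nlinarith [abs_nonneg q1, abs_nonneg q2, abs_nonneg b, abs_nonneg c]

section
variable {V : ℝ → ℝ} (b c : ℝ)

lemma InClassC.cont_exp (hV : InClassC V) : Continuous (fun u : ℝ => Real.exp (-(V (u - b) + V (c - u)))) := by
  apply Real.continuous_exp.comp
  exact ((hV.continuous.comp (continuous_id.sub continuous_const)).add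
    (hV.continuous.comp (continuous_const.sub continuous_id))).neg

lemma InClassC.integrable_exp (hV : InClassC V) :
    Integrable (fun u : ℝ => Real.exp (-(V (u - b) + V (c - u)))) := by
  obtain ⟨a, ha, B', hW⟩ := hV.W_lower b c
  apply Integrable.mono ((integrable_exp_neg_mul_abs' ha).const_mul (Real.exp B'))
    (hV.cont_exp b c).aestronglyMeasurable
  filter_upwards with u
  rw [Real.norm_of_nonneg (Real.exp_pos _).le, Real.norm_of_nonneg
    (by positivity : (0:ℝ) ≤ Real.exp B' * Real.exp (-(a * |u|))), ← Real.exp_add]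
  apply Real.exp_le_exp.mpr
  have := hW u
  linarith

lemma InClassC.integrable_mul_exp (hV : InClassC V) :
    Integrable (fun u : ℝ => u * Real.exp (-(V (u - b) + V (c - u)))) := by
  obtain ⟨a, ha, B', hW⟩ := hV.W_lower b c
  apply Integrable.mono
    ((integrable_exp_neg_mul_abs' (half_pos ha)).const_mul ((2 / a) * Real.exp B'))
    (((continuous_id.mul (hV.cont_exp b c))).aestronglyMeasurable)
  filter_upwards with u
  rw [Real.norm_of_nonneg (by positivity :
    (0:ℝ) ≤ (2 / a) * Real.exp B' * Real.exp (-(a / 2 * |u|))), Pi.mul_apply, id_eq, norm_mul,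
    Real.norm_of_nonneg (Real.exp_pos _).le, Real.norm_eq_abs]
  have habs : |u| ≤ (2 / a) * Real.exp (a / 2 * |u|) := by
    have h1 : a / 2 * |u| ≤ Real.exp (a / 2 * |u|) := by
      have := Real.add_one_le_exp (a / 2 * |u|)
      linarith
    calc |u| = (2 / a) * (a / 2 * |u|) := by field_simp
    _ ≤ (2 / a) * Real.exp (a / 2 * |u|) := by
        apply mul_le_mul_of_nonneg_left h1 (by positivity)
  calc |u| * Real.exp (-(V (u - b) + V (c - u)))
      ≤ ((2 / a) * Real.exp (a / 2 * |u|)) * Real.exp (B' - a * |u|) := by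
        apply mul_le_mul habs (Real.exp_le_exp.mpr (by have := hW u; linarith))
          (Real.exp_pos _).le (by positivity)
  _ = (2 / a) * Real.exp B' * Real.exp (-(a / 2 * |u|)) := by
        rw [mul_assoc, ← Real.exp_add, mul_assoc, ← Real.exp_add]
        ring_nf

lemma InClassC.integral_exp_pos (hV : InClassC V) :
    0 < ∫ u : ℝ, Real.exp (-(V (u - b) + V (c - u))) := by
  rw [integral_pos_iff_support_of_nonneg (fun u => (Real.exp_pos _).le)
    (hV.integrable_exp b c)]
  have : Function.support (fun u : ℝ => Real.exp (-(V (u - b) + V (c - u)))) = Set.univ :=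
    Set.eq_univ_of_forall fun u => (Real.exp_pos _).ne'
  rw [this, Real.volume_univ]
  exact ENNReal.zero_lt_top

lemma InClassC.integral_mul_exp (hV : InClassC V) :
    ∫ u : ℝ, u * Real.exp (-(V (u - b) + V (c - u)))
      = ((b + c) / 2) * ∫ u : ℝ, Real.exp (-(V (u - b) + V (c - u))) := by
  set I := ∫ u : ℝ, Real.exp (-(V (u - b) + V (c - u))) with hI
  set J := ∫ u : ℝ, u * Real.exp (-(V (u - b) + V (c - u))) with hJ
  have key : ∫ u : ℝ, ((b + c) - u) * Real.exp (-(V (u - b) + V (c - u))) = J := by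
    have := integral_sub_left_eq_self
      (fun u : ℝ => u * Real.exp (-(V (u - b) + V (c - u)))) volume (b + c)
    rw [hJ, ← this]
    apply integral_congr_ae
    filter_upwards with u
    beta_reduce
    have h1 : (b + c) - u - b = c - u := by ring
    have h2 : c - ((b + c) - u) = u - b := by ring
    rw [h1, h2, add_comm (V (c - u))]
  have hsplit : ∫ u : ℝ, ((b + c) - u) * Real.exp (-(V (u - b) + V (c - u)))
      = (b + c) * I - J := by
    rw [hI, hJ, ← integral_const_mul, ← integral_sub
      ((hV.integrable_exp b c).const_mul _) (hV.integrable_mul_exp b c)]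
    apply integral_congr_ae
    filter_upwards with u
    ring
  have : (b + c) * I - J = J := by rw [← hsplit, key]
  linarith

end

section
variable {V : ℝ → ℝ} (b c : ℝ)

lemma InClassC.rho_integrable (hV : InClassC V) : Integrable (rho V b c) :=
  (hV.integrable_exp b c).div_const _

lemma InClassC.mul_rho_integrable (hV : InClassC V) :
    Integrable (fun u => u * rho V b c u) := by
  have := ((hV.integrable_mul_exp b c).div_const
    (∫ s : ℝ, Real.exp (-(V (s - b) + V (c - s)))))
  apply this.congr
  filter_upwards with u
  unfold rho
  ring

lemma InClassC.integral_rho (hV : InClassC V) : ∫ u, rho V b c u = 1 := by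
  unfold rho
  rw [integral_div]
  exact div_self (hV.integral_exp_pos b c).ne'

lemma InClassC.integral_mul_rho (hV : InClassC V) :
    ∫ u, u * rho V b c u = (b + c) / 2 := by
  unfold rho
  have : ∀ u : ℝ, u * (Real.exp (-(V (u - b) + V (c - u))) /
      ∫ s : ℝ, Real.exp (-(V (s - b) + V (c - s))))
      = (u * Real.exp (-(V (u - b) + V (c - u)))) /
      ∫ s : ℝ, Real.exp (-(V (s - b) + V (c - s))) := fun u => by ring
  simp_rw [this]
  rw [integral_div, hV.integral_mul_exp b c,
    mul_div_assoc, div_self (hV.integral_exp_pos b c).ne', mul_one]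

lemma InClassC.Qop_coord (hV : InClassC V) (k : ℕ) (x : ℕ → ℝ) :
    Qop V k (fun z => z k) x = (x (k - 1) + x (k + 1)) / 2 := by
  unfold Qop
  simp only [Function.update_self]
  exact hV.integral_mul_rho _ _

lemma InClassC.Qop_linear (hV : InClassC V) (a : ℕ → ℝ) (N k : ℕ)
    (hk : k ∈ Finset.Icc 1 (N - 1)) (x : ℕ → ℝ) :
    Qop V k (fun z => ∑ m ∈ Finset.Icc 1 (N - 1), a m * z m) x
      - (∑ m ∈ Finset.Icc 1 (N - 1), a m * x m)
      = a k * ((x (k - 1) + x (k + 1)) / 2 - x k) := by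
  have hupd : ∀ u : ℝ, ∑ m ∈ Finset.Icc 1 (N - 1), a m * Function.update x k u m
      = (∑ m ∈ Finset.Icc 1 (N - 1), a m * x m) + a k * (u - x k) := by
    intro u
    have : ∀ m ∈ Finset.Icc 1 (N - 1), a m * Function.update x k u m
        = a m * x m + (if m = k then a k * (u - x k) else 0) := by
      intro m _
      rcases eq_or_ne m k with rfl | h
      · simp [Function.update_self]; ring
      · simp [Function.update_of_ne h, h]
    rw [Finset.sum_congr rfl this, Finset.sum_add_distrib, Finset.sum_ite_eq' _ k, if_pos hk]
  unfold Qop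
  simp_rw [hupd]
  set C := ∑ m ∈ Finset.Icc 1 (N - 1), a m * x m with hC
  have expand : ∀ u : ℝ, (C + a k * (u - x k)) * rho V (x (k - 1)) (x (k + 1)) u
      = (C - a k * x k) * rho V (x (k - 1)) (x (k + 1)) u
        + a k * (u * rho V (x (k - 1)) (x (k + 1)) u) := fun u => by ring
  simp_rw [expand]
  rw [integral_add ((hV.rho_integrable _ _).const_mul _)
    ((hV.mul_rho_integrable _ _).const_mul _),
    integral_const_mul, integral_const_mul, hV.integral_rho, hV.integral_mul_rho]
  ring

lemma gen_linear {V : ℝ → ℝ} (hV : InClassC V) (a : ℕ → ℝ) (N : ℕ) (x : ℕ → ℝ) :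
    gen V N (fun z => ∑ m ∈ Finset.Icc 1 (N - 1), a m * z m) x
      = ∑ k ∈ Finset.Icc 1 (N - 1), a k * ((x (k - 1) + x (k + 1)) / 2 - x k) := by
  unfold gen
  exact Finset.sum_congr rfl fun k hk => hV.Qop_linear a N k hk x

end

-- shift lemmas
lemma shift1 (N : ℕ) (hN : 2 ≤ N) (g x : ℕ → ℝ) (hx0 : x 0 = 0) :
    ∑ k ∈ Finset.Icc 1 (N - 1), g k * x (k - 1)
      = (∑ m ∈ Finset.Icc 1 (N - 1), g (m + 1) * x m) - g N * x (N - 1) := by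
  have h1 : Finset.Icc 1 (N - 1) = (Finset.Icc 0 (N - 2)).map (addRightEmbedding 1) := by
    rw [Finset.map_add_right_Icc]
    congr 1
    omega
  have hL : ∑ k ∈ Finset.Icc 1 (N - 1), g k * x (k - 1)
      = ∑ m ∈ Finset.Icc 0 (N - 2), g (m + 1) * x m := by
    rw [h1, Finset.sum_map]
    simp only [addRightEmbedding_apply, Nat.add_sub_cancel]
  have h2 : ∑ m ∈ Finset.Icc 1 (N - 1), g (m + 1) * x m
      = (∑ m ∈ Finset.Icc 0 (N - 2), g (m + 1) * x m) + g N * x (N - 1) := by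
    have h3 : Finset.Icc 0 (N - 1) = insert 0 (Finset.Icc 1 (N - 1)) := by
      ext m
      simp only [Finset.mem_Icc, Finset.mem_insert]
      omega
    have h5 := Finset.sum_Icc_succ_top (a := 0) (b := N - 2) (by omega)
      (fun m => g (m + 1) * x m)
    have h6 : (N - 2) + 1 = N - 1 := by omega
    rw [h6] at h5
    rw [h3, Finset.sum_insert (by simp), hx0] at h5
    simp only [mul_zero, zero_add] at h5
    have h7 : (N - 1) + 1 = N := by omega
    rw [h7] at h5
    linarith [h5]
  rw [hL, h2]
  ring

lemma shift2 (N : ℕ) (hN : 2 ≤ N) (g x : ℕ → ℝ) (hxN : x N = 0) :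
    ∑ k ∈ Finset.Icc 1 (N - 1), g k * x (k + 1)
      = (∑ m ∈ Finset.Icc 1 (N - 1), g (m - 1) * x m) - g 0 * x 1 := by
  have h1 : Finset.Icc 2 N = (Finset.Icc 1 (N - 1)).map (addRightEmbedding 1) := by
    rw [Finset.map_add_right_Icc]
    congr 1
    omega
  have h2 : ∑ m ∈ Finset.Icc 2 N, g (m - 1) * x m
      = ∑ k ∈ Finset.Icc 1 (N - 1), g k * x (k + 1) := by
    rw [h1, Finset.sum_map]
    simp only [addRightEmbedding_apply, Nat.add_sub_cancel]
  have h4 := Finset.sum_Icc_succ_top (a := 2) (b := N - 1) (by omega)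
    (fun m => g (m - 1) * x m)
  have h3 : (N - 1) + 1 = N := by omega
  rw [h3] at h4
  simp only [hxN, mul_zero, add_zero] at h4
  have h5 : Finset.Icc 1 (N - 1) = insert 1 (Finset.Icc 2 (N - 1)) := by
    ext m
    simp [Finset.mem_Icc, Finset.mem_insert]
    omega
  have h6 : ∑ m ∈ Finset.Icc 1 (N - 1), g (m - 1) * x m
      = g 0 * x 1 + ∑ m ∈ Finset.Icc 2 (N - 1), g (m - 1) * x m := by
    rw [h5, Finset.sum_insert (by simp)]
  rw [← h2, h4, h6]
  ring

/-- generic: gen of a linear function is the linear function with shifted coefficients. -/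
lemma gen_linear_formula {V : ℝ → ℝ} (hV : InClassC V) (N : ℕ) (hN : 2 ≤ N)
    (g : ℕ → ℝ) (hg0 : g 0 = 0) (hgN : g N = 0)
    (x : ℕ → ℝ) (hx0 : x 0 = 0) (hxN : x N = 0) :
    gen V N (fun z => ∑ m ∈ Finset.Icc 1 (N - 1), g m * z m) x
      = ∑ m ∈ Finset.Icc 1 (N - 1), ((g (m + 1) + g (m - 1)) / 2 - g m) * x m := by
  rw [gen_linear hV g N x]
  have expand : ∀ F G H : ℕ → ℝ,
      ∑ k ∈ Finset.Icc 1 (N - 1), (F k * (1 / 2) + G k * (1 / 2) - H k)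
        = (∑ k ∈ Finset.Icc 1 (N - 1), F k) * (1 / 2)
          + (∑ k ∈ Finset.Icc 1 (N - 1), G k) * (1 / 2)
          - ∑ k ∈ Finset.Icc 1 (N - 1), H k := by
    intro F G H
    rw [Finset.sum_sub_distrib, Finset.sum_add_distrib, ← Finset.sum_mul, ← Finset.sum_mul]
  have L : ∑ k ∈ Finset.Icc 1 (N - 1), g k * ((x (k - 1) + x (k + 1)) / 2 - x k)
      = (∑ k ∈ Finset.Icc 1 (N - 1), g k * x (k - 1)) * (1 / 2)
        + (∑ k ∈ Finset.Icc 1 (N - 1), g k * x (k + 1)) * (1 / 2)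
        - ∑ k ∈ Finset.Icc 1 (N - 1), g k * x k := by
    rw [← expand (fun k => g k * x (k - 1)) (fun k => g k * x (k + 1)) (fun k => g k * x k)]
    exact Finset.sum_congr rfl fun k _ => by ring
  have R : ∑ m ∈ Finset.Icc 1 (N - 1), ((g (m + 1) + g (m - 1)) / 2 - g m) * x m
      = (∑ m ∈ Finset.Icc 1 (N - 1), g (m + 1) * x m) * (1 / 2)
        + (∑ m ∈ Finset.Icc 1 (N - 1), g (m - 1) * x m) * (1 / 2)
        - ∑ m ∈ Finset.Icc 1 (N - 1), g m * x m := by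
    rw [← expand (fun m => g (m + 1) * x m) (fun m => g (m - 1) * x m) (fun m => g m * x m)]
    exact Finset.sum_congr rfl fun m _ => by ring
  rw [L, R, shift1 N hN g x hx0, shift2 N hN g x hxN, hg0, hgN]
  ring


end AuxProofs

/-- **Action of the generator on linear functions.**
For `V ∈ 𝒞`, `N ≥ 2` and `j ∈ {1,…,N-1}`, the function
`f_N^{(j)}(x) = Σ_{k=1}^{N-1} sin(jπk/N) x_k` satisfies
`ℒ f_N^{(j)} = -(1 - cos(jπ/N)) f_N^{(j)}` on `Ω_N`; every linear function of the coordinates is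
mapped by `ℒ` (on `Ω_N`) to a linear function; and for the coordinate map `g_k(x) = x_k` one has
`Q_k g_k (x) = (x_{k-1} + x_{k+1})/2`. -/
theorem generator_on_linear_functions (V : ℝ → ℝ) (hV : InClassC V) (N : ℕ) (hN : 2 ≤ N)
    (j : ℕ) (hj1 : 1 ≤ j) (hj2 : j ≤ N - 1) :
    (∀ x : ℕ → ℝ, x 0 = 0 → x N = 0 →
      gen V N (fun z => ∑ k ∈ Finset.Icc 1 (N - 1), Real.sin (j * k * Real.pi / N) * z k) x =
        -(1 - Real.cos (j * Real.pi / N)) *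
          ∑ k ∈ Finset.Icc 1 (N - 1), Real.sin (j * k * Real.pi / N) * x k) ∧
    (∀ a : ℕ → ℝ, ∃ b : ℕ → ℝ, ∀ x : ℕ → ℝ, x 0 = 0 → x N = 0 →
      gen V N (fun z => ∑ k ∈ Finset.Icc 1 (N - 1), a k * z k) x =
        ∑ k ∈ Finset.Icc 1 (N - 1), b k * x k) ∧
    (∀ k : ℕ, 1 ≤ k → k ≤ N - 1 → ∀ x : ℕ → ℝ,
      Qop V k (fun z => z k) x = (x (k - 1) + x (k + 1)) / 2) := by
  have hNR : (0 : ℝ) < (N : ℝ) := by positivity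
  refine ⟨?_, ?_, fun k _ _ x => hV.Qop_coord k x⟩
  · intro x hx0 hxN
    set g : ℕ → ℝ := fun k => Real.sin (j * k * Real.pi / N) with hg
    have hg0 : g 0 = 0 := by simp [hg]
    have hgN : g N = 0 := by
      have : (j : ℝ) * (N : ℝ) * Real.pi / (N : ℝ) = (j : ℝ) * Real.pi := by
        field_simp
      simp only [hg, this]
      exact Real.sin_nat_mul_pi j
    rw [gen_linear_formula hV N hN g hg0 hgN x hx0 hxN]
    rw [Finset.mul_sum]
    apply Finset.sum_congr rfl
    intro m hm
    have hm1 : 1 ≤ m := (Finset.mem_Icc.mp hm).1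
    have hcast : ((m - 1 : ℕ) : ℝ) = (m : ℝ) - 1 := by
      have := Nat.cast_sub (R := ℝ) hm1
      simpa using this
    have hid : g (m + 1) + g (m - 1) = 2 * Real.cos (j * Real.pi / N) * g m := by
      simp only [hg, hcast, Nat.cast_add, Nat.cast_one]
      have e1 : (j : ℝ) * ((m : ℝ) + 1) * Real.pi / N
          = (j : ℝ) * (m : ℝ) * Real.pi / N + (j : ℝ) * Real.pi / N := by ring
      have e2 : (j : ℝ) * ((m : ℝ) - 1) * Real.pi / N
          = (j : ℝ) * (m : ℝ) * Real.pi / N - (j : ℝ) * Real.pi / N := by ring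
      rw [e1, e2, Real.sin_add, Real.sin_sub]
      ring
    rw [hid]
    ring
  · intro a
    set g : ℕ → ℝ := fun k => if 1 ≤ k ∧ k ≤ N - 1 then a k else 0 with hg
    refine ⟨fun m => (g (m + 1) + g (m - 1)) / 2 - g m, fun x hx0 hxN => ?_⟩
    have hg0 : g 0 = 0 := by simp [hg]
    have hgN : g N = 0 := by
      simp only [hg]
      rw [if_neg (by omega)]
    have hsame : ∀ z : ℕ → ℝ, ∑ k ∈ Finset.Icc 1 (N - 1), a k * z k
        = ∑ k ∈ Finset.Icc 1 (N - 1), g k * z k := by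
      intro z
      apply Finset.sum_congr rfl
      intro k hk
      rw [Finset.mem_Icc] at hk
      simp only [hg, if_pos hk]
    have : gen V N (fun z => ∑ k ∈ Finset.Icc 1 (N - 1), a k * z k) x
        = gen V N (fun z => ∑ k ∈ Finset.Icc 1 (N - 1), g k * z k) x := by
      unfold gen Qop
      simp_rw [hsame]
    rw [this, gen_linear_formula hV N hN g hg0 hgN x hx0 hxN]

end
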